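/- arXiv:1604.01911 — 2 statements merged into one kernel-verified Lean document; each statement's English description precedes it below -/
import Mathlib

section
/- Let Ω be a finite set with measure m : Ω → (0,∞), symmetric weights μ_{xy} ≥ 0, intrinsic metric condition ∑_y μ_{xy}ρ(x,y)² ≤ m_x for a pseudo metric ρ with jump size at most s (i.e. ρ(x,y) ≤ s whenever μ_{xy} > 0), and let ω : Ω → ℝ be κ-Lipschitz with respect to ρ. Then for every f : Ω → ℝ, ∑_{x,y∈Ω} μ_{xy}·f(x)·f(y)·(e^{ω(y)/2} − e^{ω(x)/2})² ≤ (2/s²)(cosh(κs/2) − 1)·∑_{x∈Ω} m_x·f(x)²·e^{ω(x)}. -/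
open Real

lemma sinh_convex : ConvexOn ℝ (Set.Ici (0:ℝ)) Real.sinh := by
  apply convexOn_of_deriv2_nonneg (convex_Ici 0)
    Real.continuous_sinh.continuousOn
  · intro x hx
    exact Real.differentiable_sinh.differentiableAt.differentiableWithinAt
  · intro x hx
    rw [Real.deriv_sinh]
    exact Real.differentiable_cosh.differentiableAt.differentiableWithinAt
  · intro x hx
    show 0 ≤ deriv^[2] Real.sinh x
    rw [show deriv^[2] Real.sinh = deriv (deriv Real.sinh) from rfl,
      Real.deriv_sinh, Real.deriv_cosh]
    have : (0:ℝ) ≤ x := le_of_lt (by simpa using hx)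
    exact Real.sinh_nonneg_iff.2 this

lemma sinh_mul_le (c t : ℝ) (hc : 0 ≤ c) (ht0 : 0 ≤ t) (ht1 : t ≤ 1) :
    Real.sinh (t * c) ≤ t * Real.sinh c := by
  have h := sinh_convex.2 (Set.mem_Ici.2 hc) (Set.mem_Ici.2 (le_refl (0:ℝ)))
    ht0 (by linarith : (0:ℝ) ≤ 1 - t) (by ring)
  simpa [smul_eq_mul] using h

lemma cosh_sub_one (b : ℝ) : Real.cosh b - 1 = 2 * Real.sinh (b/2) ^ 2 := by
  have h : Real.cosh b = Real.cosh (2 * (b/2)) := by ring_nf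
  rw [h, Real.cosh_two_mul, Real.cosh_sq]
  ring

lemma cosh_scale (a b t : ℝ) (ha : 0 ≤ a) (hb : 0 ≤ b) (hbt : b ≤ t * a)
    (ht0 : 0 ≤ t) (ht1 : t ≤ 1) :
    Real.cosh b - 1 ≤ t ^ 2 * (Real.cosh a - 1) := by
  have h1 : Real.cosh b ≤ Real.cosh (t * a) := by
    rw [Real.cosh_le_cosh, abs_of_nonneg hb, abs_of_nonneg (by positivity)]
    exact hbt
  have h2 : Real.sinh (t * (a/2)) ≤ t * Real.sinh (a/2) :=
    sinh_mul_le (a/2) t (by linarith) ht0 ht1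
  have hnn : 0 ≤ Real.sinh (t * (a/2)) := Real.sinh_nonneg_iff.2 (by positivity)
  have h3 : Real.sinh (t * (a/2)) ^ 2 ≤ (t * Real.sinh (a/2)) ^ 2 := by
    apply sq_le_sq' _ h2
    linarith
  have e1 := cosh_sub_one (t*a)
  have e2 := cosh_sub_one a
  have e3 : t * a / 2 = t * (a/2) := by ring
  rw [e3] at e1
  nlinarith [h1, h3]

lemma sq_exp_diff (p q : ℝ) :
    (Real.exp q - Real.exp p) ^ 2 = 2 * Real.exp (p + q) * (Real.cosh (q - p) - 1) := by
  rw [Real.cosh_eq]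
  have e1 : Real.exp (p + q) * Real.exp (q - p) = Real.exp q * Real.exp q := by
    rw [← Real.exp_add, ← Real.exp_add]; ring_nf
  have e2 : Real.exp (p + q) * Real.exp (-(q - p)) = Real.exp p * Real.exp p := by
    rw [← Real.exp_add, ← Real.exp_add]; ring_nf
  have e3 : Real.exp (p + q) = Real.exp p * Real.exp q := Real.exp_add p q
  nlinarith [e1, e2, e3]

theorem lipschitz_weight_estimate {Ω : Type*} [Fintype Ω]
    (m : Ω → ℝ) (hm : ∀ x, 0 < m x)
    (μ : Ω → Ω → ℝ) (hμ : ∀ x y, 0 ≤ μ x y) (hsym : ∀ x y, μ x y = μ y x)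
    (ρ : Ω → Ω → ℝ) (hρ0 : ∀ x, ρ x x = 0) (hρsym : ∀ x y, ρ x y = ρ y x)
    (hρtri : ∀ x y z, ρ x z ≤ ρ x y + ρ y z) (hρnn : ∀ x y, 0 ≤ ρ x y)
    (hint : ∀ x, ∑ y, μ x y * ρ x y ^ 2 ≤ m x)
    (s : ℝ) (hs : 0 < s) (hjump : ∀ x y, 0 < μ x y → ρ x y ≤ s)
    (κ : ℝ) (hκ : 0 ≤ κ)
    (ω : Ω → ℝ) (hω : ∀ x y, |ω x - ω y| ≤ κ * ρ x y)
    (f : Ω → ℝ) :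
    ∑ x, ∑ y, μ x y * f x * f y * (Real.exp (ω y / 2) - Real.exp (ω x / 2)) ^ 2
      ≤ (2 / s ^ 2) * (Real.cosh (κ * s / 2) - 1)
        * ∑ x, m x * f x ^ 2 * Real.exp (ω x) := by
  obtain ⟨C, hC⟩ : ∃ C, Real.cosh (κ * s / 2) - 1 = C := ⟨_, rfl⟩
  rw [hC]
  have hCnn : 0 ≤ C := by
    have := Real.one_le_cosh (κ * s / 2)
    linarith
  -- pointwise bound
  have key : ∀ x y, μ x y * f x * f y * (Real.exp (ω y / 2) - Real.exp (ω x / 2)) ^ 2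
      ≤ C / s ^ 2 * (μ x y * ρ x y ^ 2)
        * (f x ^ 2 * Real.exp (ω x) + f y ^ 2 * Real.exp (ω y)) := by
    intro x y
    rcases eq_or_lt_of_le (hμ x y) with h0 | hpos
    · rw [← h0]
      have : 0 ≤ f x ^ 2 * Real.exp (ω x) + f y ^ 2 * Real.exp (ω y) := by positivity
      nlinarith
    · have hρs : ρ x y ≤ s := hjump x y hpos
      -- cosh bound
      have habs : |(ω y - ω x) / 2| ≤ ρ x y / s * (κ * s / 2) := by
        have h1 : |ω y - ω x| ≤ κ * ρ x y := by
          rw [abs_sub_comm]; exact hω x y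
        have h2 : ρ x y / s * (κ * s / 2) = κ * ρ x y / 2 := by
          field_simp
        rw [abs_div, abs_of_nonneg (by norm_num : (0:ℝ) ≤ 2), h2]
        linarith
      have hD : Real.cosh ((ω y - ω x) / 2) - 1 ≤ (ρ x y / s) ^ 2 * C := by
        rw [← Real.cosh_abs]
        rw [← hC]
        exact cosh_scale (κ * s / 2) _ (ρ x y / s)
          (div_nonneg (mul_nonneg hκ hs.le) (by norm_num)) (abs_nonneg _)
          habs (div_nonneg (hρnn x y) hs.le) (by rw [div_le_one hs]; exact hρs)
      have hDnn : 0 ≤ Real.cosh ((ω y - ω x) / 2) - 1 := by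
        have := Real.one_le_cosh ((ω y - ω x) / 2); linarith
      -- AM-GM
      have hamgm : f x * f y * Real.exp ((ω x + ω y) / 2)
          ≤ (f x ^ 2 * Real.exp (ω x) + f y ^ 2 * Real.exp (ω y)) / 2 := by
        have e1 : Real.exp ((ω x + ω y) / 2) = Real.exp (ω x / 2) * Real.exp (ω y / 2) := by
          rw [← Real.exp_add]; ring_nf
        have e2 : Real.exp (ω x / 2) * Real.exp (ω x / 2) = Real.exp (ω x) := by
          rw [← Real.exp_add]; ring_nf
        have e3 : Real.exp (ω y / 2) * Real.exp (ω y / 2) = Real.exp (ω y) := by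
          rw [← Real.exp_add]; ring_nf
        rw [e1, ← e2, ← e3]
        nlinarith [sq_nonneg (f x * Real.exp (ω x / 2) - f y * Real.exp (ω y / 2))]
      -- identity
      have hid : (Real.exp (ω y / 2) - Real.exp (ω x / 2)) ^ 2
          = 2 * Real.exp ((ω x + ω y) / 2) * (Real.cosh ((ω y - ω x) / 2) - 1) := by
        have := sq_exp_diff (ω x / 2) (ω y / 2)
        rw [this]
        ring_nf
      rw [hid]
      have hBnn : 0 ≤ (f x ^ 2 * Real.exp (ω x) + f y ^ 2 * Real.exp (ω y)) / 2 := by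
        positivity
      have step1 : μ x y * f x * f y *
            (2 * Real.exp ((ω x + ω y) / 2) * (Real.cosh ((ω y - ω x) / 2) - 1))
          ≤ μ x y * (2 * (Real.cosh ((ω y - ω x) / 2) - 1)) *
            ((f x ^ 2 * Real.exp (ω x) + f y ^ 2 * Real.exp (ω y)) / 2) := by
        have := mul_le_mul_of_nonneg_left hamgm
          (by positivity : 0 ≤ μ x y * (2 * (Real.cosh ((ω y - ω x) / 2) - 1)))
        nlinarith [this]
      have step2 : μ x y * (2 * (Real.cosh ((ω y - ω x) / 2) - 1)) *
            ((f x ^ 2 * Real.exp (ω x) + f y ^ 2 * Real.exp (ω y)) / 2)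
          ≤ μ x y * (2 * ((ρ x y / s) ^ 2 * C)) *
            ((f x ^ 2 * Real.exp (ω x) + f y ^ 2 * Real.exp (ω y)) / 2) := by
        apply mul_le_mul_of_nonneg_right _ hBnn
        have := mul_le_mul_of_nonneg_left hD (hμ x y)
        nlinarith [this]
      have heq : μ x y * (2 * ((ρ x y / s) ^ 2 * C)) *
            ((f x ^ 2 * Real.exp (ω x) + f y ^ 2 * Real.exp (ω y)) / 2)
          = C / s ^ 2 * (μ x y * ρ x y ^ 2)
            * (f x ^ 2 * Real.exp (ω x) + f y ^ 2 * Real.exp (ω y)) := by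
        field_simp
      linarith [step1, step2, heq.le, heq.ge]
  -- sum the pointwise bound
  have hsym2 : ∀ x y : Ω, μ x y * ρ x y ^ 2 = μ y x * ρ y x ^ 2 := fun x y => by
    rw [hsym, hρsym]
  have hT : (∑ x, ∑ y, (μ x y * ρ x y ^ 2) * (f y ^ 2 * Real.exp (ω y)))
      = ∑ x, f x ^ 2 * Real.exp (ω x) * ∑ y, μ x y * ρ x y ^ 2 := by
    rw [Finset.sum_comm]
    refine Finset.sum_congr rfl fun x _ => ?_
    rw [Finset.mul_sum]
    exact Finset.sum_congr rfl fun y _ => by rw [hsym2 y x]; ring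
  have hrow : ∀ x : Ω, ∑ y, C / s ^ 2 * (μ x y * ρ x y ^ 2)
        * (f x ^ 2 * Real.exp (ω x) + f y ^ 2 * Real.exp (ω y))
      = C / s ^ 2 * (f x ^ 2 * Real.exp (ω x) * ∑ y, μ x y * ρ x y ^ 2)
        + C / s ^ 2 * ∑ y, (μ x y * ρ x y ^ 2) * (f y ^ 2 * Real.exp (ω y)) := by
    intro x
    simp only [Finset.mul_sum]
    rw [← Finset.sum_add_distrib]
    exact Finset.sum_congr rfl fun y _ => by ring
  have hmono : ∀ x : Ω, C / s ^ 2 * (f x ^ 2 * Real.exp (ω x) * ∑ y, μ x y * ρ x y ^ 2)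
      ≤ C / s ^ 2 * (f x ^ 2 * Real.exp (ω x) * m x) := by
    intro x
    apply mul_le_mul_of_nonneg_left _ (by positivity)
    exact mul_le_mul_of_nonneg_left (hint x) (by positivity)
  calc ∑ x, ∑ y, μ x y * f x * f y * (Real.exp (ω y / 2) - Real.exp (ω x / 2)) ^ 2
      ≤ ∑ x, ∑ y, C / s ^ 2 * (μ x y * ρ x y ^ 2)
          * (f x ^ 2 * Real.exp (ω x) + f y ^ 2 * Real.exp (ω y)) := by
        exact Finset.sum_le_sum fun x _ => Finset.sum_le_sum fun y _ => key x y
    _ = ∑ x, (C / s ^ 2 * (f x ^ 2 * Real.exp (ω x) * ∑ y, μ x y * ρ x y ^ 2)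
          + C / s ^ 2 * ∑ y, (μ x y * ρ x y ^ 2) * (f y ^ 2 * Real.exp (ω y))) := by
        exact Finset.sum_congr rfl fun x _ => hrow x
    _ = ∑ x, C / s ^ 2 * (f x ^ 2 * Real.exp (ω x) * ∑ y, μ x y * ρ x y ^ 2)
          + C / s ^ 2 * ∑ x, ∑ y, (μ x y * ρ x y ^ 2) * (f y ^ 2 * Real.exp (ω y)) := by
        rw [Finset.sum_add_distrib, Finset.mul_sum]
    _ = ∑ x, C / s ^ 2 * (f x ^ 2 * Real.exp (ω x) * ∑ y, μ x y * ρ x y ^ 2)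
          + ∑ x, C / s ^ 2 * (f x ^ 2 * Real.exp (ω x) * ∑ y, μ x y * ρ x y ^ 2) := by
        rw [hT, Finset.mul_sum]
    _ ≤ ∑ x, C / s ^ 2 * (f x ^ 2 * Real.exp (ω x) * m x)
          + ∑ x, C / s ^ 2 * (f x ^ 2 * Real.exp (ω x) * m x) := by
        have h := Finset.sum_le_sum fun x (_ : x ∈ Finset.univ) => hmono x
        exact add_le_add h h
    _ = (2 / s ^ 2) * C * ∑ x, m x * f x ^ 2 * Real.exp (ω x) := by
        rw [← two_mul, Finset.mul_sum, Finset.mul_sum]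
        exact Finset.sum_congr rfl fun x _ => by ring
end

section
/- Integral maximum principle on a finite graph: Let Ω be a finite set with measure m, symmetric weights μ, intrinsic pseudo metric ρ of jump size ≤ s, Dirichlet Laplacian Δ_Ω with first eigenvalue λ₁(Ω), and ω : Ω → ℝ κ-Lipschitz w.r.t. ρ. If u : [0,∞) × Ω → ℝ solves ∂_t u = Δ_Ω u, then the function t ↦ exp(2λ₁(Ω)t − (2/s²)(cosh(κs/2) − 1)t)·∑_{x∈Ω} m_x·u(t,x)²·e^{ω(x)} is nonincreasing on [0,∞). -/
private lemma sinh_mul_le_s15 {θ y : ℝ} (hθ0 : 0 ≤ θ) (hθ1 : θ ≤ 1) (hy : 0 ≤ y) :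
    Real.sinh (θ * y) ≤ θ * Real.sinh y := by
  have hder : ∀ z : ℝ, HasDerivAt (fun z => θ * Real.sinh z - Real.sinh (θ * z))
      (θ * Real.cosh z - Real.cosh (θ * z) * θ) z := by
    intro z
    have h1 : HasDerivAt (fun z : ℝ => θ * Real.sinh z) (θ * Real.cosh z) z :=
      (Real.hasDerivAt_sinh z).const_mul θ
    have h2 : HasDerivAt (fun z : ℝ => Real.sinh (θ * z)) (Real.cosh (θ * z) * θ) z := by
      have h := (Real.hasDerivAt_sinh (θ * z)).comp z ((hasDerivAt_id z).const_mul θ)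
      rw [mul_one] at h
      exact h
    exact h1.sub h2
  have hmono : MonotoneOn (fun z => θ * Real.sinh z - Real.sinh (θ * z)) (Set.Ici 0) := by
    apply monotoneOn_of_deriv_nonneg (convex_Ici 0)
    · exact fun z _ => ((hder z).continuousAt).continuousWithinAt
    · intro z _
      exact ((hder z).differentiableAt).differentiableWithinAt
    · intro z hz
      rw [interior_Ici] at hz
      have hz' : (0:ℝ) < z := hz
      rw [(hder z).deriv]
      have hc : Real.cosh (θ * z) ≤ Real.cosh z := by
        rw [Real.cosh_le_cosh]
        rw [abs_of_nonneg (mul_nonneg hθ0 hz'.le), abs_of_nonneg hz'.le]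
        nlinarith
      nlinarith
  have h0 : (fun z => θ * Real.sinh z - Real.sinh (θ * z)) 0 = 0 := by simp
  have := hmono (Set.self_mem_Ici) (Set.mem_Ici.mpr hy) hy
  rw [h0] at this
  simpa using this

private lemma cosh_sub_one_eq (x : ℝ) : Real.cosh x - 1 = 2 * Real.sinh (x / 2) ^ 2 := by
  have h := Real.cosh_two_mul (x / 2)
  rw [show 2 * (x / 2) = x by ring] at h
  rw [h, Real.cosh_sq]
  ring

private lemma cosh_ratio {κ r s : ℝ} (hκ : 0 ≤ κ) (hr : 0 ≤ r) (hs : 0 < s) (hrs : r ≤ s) :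
    Real.cosh (κ * r / 2) - 1 ≤ r ^ 2 / s ^ 2 * (Real.cosh (κ * s / 2) - 1) := by
  rw [cosh_sub_one_eq, cosh_sub_one_eq]
  have key : Real.sinh (κ * r / 2 / 2) ≤ r / s * Real.sinh (κ * s / 2 / 2) := by
    have := sinh_mul_le_s15 (θ := r / s) (y := κ * s / 2 / 2)
      (div_nonneg hr hs.le) ((div_le_one hs).mpr hrs) (by positivity)
    rw [show r / s * (κ * s / 2 / 2) = κ * r / 2 / 2 by field_simp] at this
    exact this
  have h1 : 0 ≤ Real.sinh (κ * r / 2 / 2) := Real.sinh_nonneg_iff.mpr (by positivity)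
  have h2 : 0 ≤ Real.sinh (κ * s / 2 / 2) := Real.sinh_nonneg_iff.mpr (by positivity)
  have hsq : Real.sinh (κ * r / 2 / 2) ^ 2 ≤ (r / s) ^ 2 * Real.sinh (κ * s / 2 / 2) ^ 2 := by
    nlinarith [key, h1, mul_nonneg (div_nonneg hr hs.le) h2]
  calc 2 * Real.sinh (κ * r / 2 / 2) ^ 2 ≤ 2 * ((r / s) ^ 2 * Real.sinh (κ * s / 2 / 2) ^ 2) := by
        linarith
    _ = r ^ 2 / s ^ 2 * (2 * Real.sinh (κ * s / 2 / 2) ^ 2) := by ring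

private lemma edge_identity (a b α β : ℝ) :
    2 * Real.exp α * a * (b - a) + 2 * Real.exp β * b * (a - b)
      = -2 * (b * Real.exp (β / 2) - a * Real.exp (α / 2)) ^ 2
        + 4 * (a * Real.exp (α / 2)) * (b * Real.exp (β / 2))
            * (Real.cosh ((β - α) / 2) - 1) := by
  rw [Real.cosh_eq]
  have h1 : Real.exp ((β - α) / 2) * Real.exp (α / 2) = Real.exp (β / 2) := by
    rw [← Real.exp_add]; congr 1; ring
  have h2 : Real.exp (-((β - α) / 2)) * Real.exp (β / 2) = Real.exp (α / 2) := by
    rw [← Real.exp_add]; congr 1; ring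
  have hA : Real.exp α = Real.exp (α / 2) * Real.exp (α / 2) := by
    rw [← Real.exp_add]; congr 1; ring
  have hB : Real.exp β = Real.exp (β / 2) * Real.exp (β / 2) := by
    rw [← Real.exp_add]; congr 1; ring
  rw [hA, hB]
  linear_combination (-2 * a * b * Real.exp (β / 2)) * h1 + (-2 * a * b * Real.exp (α / 2)) * h2

private lemma rayleigh {Ω : Type*} [Fintype Ω]
    (m : Ω → ℝ) (hm : ∀ x, 0 < m x)
    (μ : Ω → Ω → ℝ) (hμ : ∀ x y, 0 ≤ μ x y)
    (lam1 : ℝ) (hlam : lam1 = sInf {q : ℝ | ∃ g : Ω → ℝ, g ≠ 0 ∧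
        q = ((1 / 2) * ∑ x, ∑ y, μ x y * (g y - g x) ^ 2) / (∑ x, m x * g x ^ 2)})
    (v : Ω → ℝ) :
    2 * lam1 * (∑ x, m x * v x ^ 2) ≤ ∑ x, ∑ y, μ x y * (v y - v x) ^ 2 := by
  have hQnn : (0:ℝ) ≤ ∑ x, ∑ y, μ x y * (v y - v x) ^ 2 :=
    Finset.sum_nonneg fun x _ => Finset.sum_nonneg fun y _ =>
      mul_nonneg (hμ x y) (sq_nonneg _)
  have hEnn : (0:ℝ) ≤ ∑ x, m x * v x ^ 2 :=
    Finset.sum_nonneg fun x _ => mul_nonneg (hm x).le (sq_nonneg _)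
  rcases hEnn.eq_or_lt with h0 | hpos
  · rw [← h0, mul_zero]; exact hQnn
  · have hvne : v ≠ 0 := by
      intro hv
      rw [hv] at hpos
      simp at hpos
    have hbdd : BddBelow {q : ℝ | ∃ g : Ω → ℝ, g ≠ 0 ∧
        q = ((1 / 2) * ∑ x, ∑ y, μ x y * (g y - g x) ^ 2) / (∑ x, m x * g x ^ 2)} := by
      refine ⟨0, ?_⟩
      rintro q ⟨g, _, rfl⟩
      apply div_nonneg
      · apply mul_nonneg (by norm_num)
        exact Finset.sum_nonneg fun x _ => Finset.sum_nonneg fun y _ =>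
          mul_nonneg (hμ x y) (sq_nonneg _)
      · exact Finset.sum_nonneg fun x _ => mul_nonneg (hm x).le (sq_nonneg _)
    have hmem : ((1 / 2) * ∑ x, ∑ y, μ x y * (v y - v x) ^ 2) / (∑ x, m x * v x ^ 2) ∈
        {q : ℝ | ∃ g : Ω → ℝ, g ≠ 0 ∧
          q = ((1 / 2) * ∑ x, ∑ y, μ x y * (g y - g x) ^ 2) / (∑ x, m x * g x ^ 2)} :=
      ⟨v, hvne, rfl⟩
    have hle : lam1 ≤ ((1 / 2) * ∑ x, ∑ y, μ x y * (v y - v x) ^ 2) / (∑ x, m x * v x ^ 2) :=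
      hlam ▸ csInf_le hbdd hmem
    rw [le_div_iff₀ hpos] at hle
    linarith

private lemma key_ineq {Ω : Type*} [Fintype Ω]
    (m : Ω → ℝ) (hm : ∀ x, 0 < m x)
    (μ : Ω → Ω → ℝ) (hμ : ∀ x y, 0 ≤ μ x y) (hsym : ∀ x y, μ x y = μ y x)
    (ρ : Ω → Ω → ℝ) (hρsym : ∀ x y, ρ x y = ρ y x) (hρnn : ∀ x y, 0 ≤ ρ x y)
    (hint : ∀ x, ∑ y, μ x y * ρ x y ^ 2 ≤ m x)
    (s : ℝ) (hs : 0 < s) (hjump : ∀ x y, 0 < μ x y → ρ x y ≤ s)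
    (lam1 : ℝ) (hlam : lam1 = sInf {q : ℝ | ∃ g : Ω → ℝ, g ≠ 0 ∧
        q = ((1 / 2) * ∑ x, ∑ y, μ x y * (g y - g x) ^ 2) / (∑ x, m x * g x ^ 2)})
    (κ : ℝ) (hκ : 0 ≤ κ) (ω : Ω → ℝ) (hω : ∀ x y, |ω x - ω y| ≤ κ * ρ x y)
    (w : Ω → ℝ) :
    ∑ x, m x * (2 * w x * ((m x)⁻¹ * ∑ y, μ x y * (w y - w x))) * Real.exp (ω x)
      ≤ ((2 / s ^ 2) * (Real.cosh (κ * s / 2) - 1) - 2 * lam1)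
          * ∑ x, m x * w x ^ 2 * Real.exp (ω x) := by
  set L : ℝ := Real.cosh (κ * s / 2) - 1 with hL
  have hLnn : 0 ≤ L := by
    rw [hL]; linarith [Real.one_le_cosh (κ * s / 2)]
  set v : Ω → ℝ := fun x => w x * Real.exp (ω x / 2) with hv
  -- rewrite the energy
  have hEv : (∑ x, m x * w x ^ 2 * Real.exp (ω x)) = ∑ x, m x * v x ^ 2 := by
    refine Finset.sum_congr rfl fun x _ => ?_
    have hexp : Real.exp (ω x) = Real.exp (ω x / 2) * Real.exp (ω x / 2) := by
      rw [← Real.exp_add]; congr 1; ring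
    simp only [hv, hexp]; ring
  -- rewrite the left side as a double sum
  have hstep0 : (∑ x, m x * (2 * w x * ((m x)⁻¹ * ∑ y, μ x y * (w y - w x))) * Real.exp (ω x))
      = ∑ x, ∑ y, μ x y * (2 * Real.exp (ω x) * w x * (w y - w x)) := by
    refine Finset.sum_congr rfl fun x _ => ?_
    have hmx : m x ≠ 0 := (hm x).ne'
    calc m x * (2 * w x * ((m x)⁻¹ * ∑ y, μ x y * (w y - w x))) * Real.exp (ω x)
        = (2 * Real.exp (ω x) * w x) * ∑ y, μ x y * (w y - w x) := by
          field_simp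
      _ = ∑ y, μ x y * (2 * Real.exp (ω x) * w x * (w y - w x)) := by
          rw [Finset.mul_sum]
          exact Finset.sum_congr rfl fun y _ => by ring
  rw [hstep0, hEv]
  -- per-pair estimate
  have hpair : ∀ x y : Ω,
      μ x y * (2 * Real.exp (ω x) * w x * (w y - w x))
        + μ y x * (2 * Real.exp (ω y) * w y * (w x - w y))
      ≤ μ x y * (-2 * (v y - v x) ^ 2
            + 2 * (v x ^ 2 + v y ^ 2) * (ρ x y ^ 2 / s ^ 2 * L)) := by
    intro x y
    rw [← hsym x y]
    rcases (hμ x y).eq_or_lt with h0 | hpos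
    · rw [← h0]; simp
    · have hρs := hjump x y hpos
      have hid := edge_identity (w x) (w y) (ω x) (ω y)
      have hδ : |ω y - ω x| ≤ κ * ρ x y := by rw [abs_sub_comm]; exact hω x y
      have hc1 : Real.cosh ((ω y - ω x) / 2) ≤ Real.cosh (κ * ρ x y / 2) := by
        rw [Real.cosh_le_cosh]
        have hr : |κ * ρ x y| = κ * ρ x y := abs_of_nonneg (mul_nonneg hκ (hρnn x y))
        rw [abs_div, abs_div, abs_two, hr]
        linarith
      have hc2 : Real.cosh (κ * ρ x y / 2) - 1 ≤ ρ x y ^ 2 / s ^ 2 * L :=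
        cosh_ratio hκ (hρnn x y) hs hρs
      have hc0 : (1 : ℝ) ≤ Real.cosh ((ω y - ω x) / 2) := Real.one_le_cosh _
      have hcR : Real.cosh ((ω y - ω x) / 2) - 1 ≤ ρ x y ^ 2 / s ^ 2 * L := by linarith
      have hscal : 2 * Real.exp (ω x) * w x * (w y - w x)
            + 2 * Real.exp (ω y) * w y * (w x - w y)
          ≤ -2 * (v y - v x) ^ 2 + 2 * (v x ^ 2 + v y ^ 2) * (ρ x y ^ 2 / s ^ 2 * L) := by
        rw [hid]
        simp only [hv]
        have hP : 4 * (w x * Real.exp (ω x / 2)) * (w y * Real.exp (ω y / 2))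
              * (Real.cosh ((ω y - ω x) / 2) - 1)
            ≤ 2 * ((w x * Real.exp (ω x / 2)) ^ 2 + (w y * Real.exp (ω y / 2)) ^ 2)
              * (Real.cosh ((ω y - ω x) / 2) - 1) := by
          nlinarith [sq_nonneg (w x * Real.exp (ω x / 2) - w y * Real.exp (ω y / 2)), hc0]
        have hQ : 2 * ((w x * Real.exp (ω x / 2)) ^ 2 + (w y * Real.exp (ω y / 2)) ^ 2)
              * (Real.cosh ((ω y - ω x) / 2) - 1)
            ≤ 2 * ((w x * Real.exp (ω x / 2)) ^ 2 + (w y * Real.exp (ω y / 2)) ^ 2)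
              * (ρ x y ^ 2 / s ^ 2 * L) :=
          mul_le_mul_of_nonneg_left hcR (by positivity)
        linarith
      calc μ x y * (2 * Real.exp (ω x) * w x * (w y - w x))
            + μ x y * (2 * Real.exp (ω y) * w y * (w x - w y))
          = μ x y * (2 * Real.exp (ω x) * w x * (w y - w x)
              + 2 * Real.exp (ω y) * w y * (w x - w y)) := by ring
        _ ≤ μ x y * (-2 * (v y - v x) ^ 2
              + 2 * (v x ^ 2 + v y ^ 2) * (ρ x y ^ 2 / s ^ 2 * L)) :=
          mul_le_mul_of_nonneg_left hscal (hμ x y)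
  -- symmetrization
  have hswap : (∑ x, ∑ y, μ y x * (2 * Real.exp (ω y) * w y * (w x - w y)))
      = ∑ x, ∑ y, μ x y * (2 * Real.exp (ω x) * w x * (w y - w x)) := Finset.sum_comm
  have h2T : (∑ x, ∑ y, μ x y * (2 * Real.exp (ω x) * w x * (w y - w x)))
        + (∑ x, ∑ y, μ x y * (2 * Real.exp (ω x) * w x * (w y - w x)))
      = ∑ x, ∑ y, (μ x y * (2 * Real.exp (ω x) * w x * (w y - w x))
          + μ y x * (2 * Real.exp (ω y) * w y * (w x - w y))) := by
    have hdist : (∑ x, ∑ y, (μ x y * (2 * Real.exp (ω x) * w x * (w y - w x))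
          + μ y x * (2 * Real.exp (ω y) * w y * (w x - w y))))
        = (∑ x, ∑ y, μ x y * (2 * Real.exp (ω x) * w x * (w y - w x)))
          + ∑ x, ∑ y, μ y x * (2 * Real.exp (ω y) * w y * (w x - w y)) := by
      rw [← Finset.sum_add_distrib]
      exact Finset.sum_congr rfl fun x _ => Finset.sum_add_distrib
    rw [hdist, hswap]
  have hTbound : (∑ x, ∑ y, μ x y * (2 * Real.exp (ω x) * w x * (w y - w x)))
        + (∑ x, ∑ y, μ x y * (2 * Real.exp (ω x) * w x * (w y - w x)))
      ≤ ∑ x, ∑ y, μ x y * (-2 * (v y - v x) ^ 2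
          + 2 * (v x ^ 2 + v y ^ 2) * (ρ x y ^ 2 / s ^ 2 * L)) := by
    rw [h2T]
    exact Finset.sum_le_sum fun x _ => Finset.sum_le_sum fun y _ => hpair x y
  -- split the right-hand double sum
  have hsplit : (∑ x, ∑ y, μ x y * (-2 * (v y - v x) ^ 2
        + 2 * (v x ^ 2 + v y ^ 2) * (ρ x y ^ 2 / s ^ 2 * L)))
      = (-2) * (∑ x, ∑ y, μ x y * (v y - v x) ^ 2)
        + (2 / s ^ 2 * L) * (∑ x, ∑ y, μ x y * (v x ^ 2 + v y ^ 2) * ρ x y ^ 2) := by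
    rw [Finset.mul_sum, Finset.mul_sum, ← Finset.sum_add_distrib]
    refine Finset.sum_congr rfl fun x _ => ?_
    rw [Finset.mul_sum, Finset.mul_sum, ← Finset.sum_add_distrib]
    refine Finset.sum_congr rfl fun y _ => ?_
    field_simp
  -- bound the ρ-weighted sum
  have hRsum : (∑ x, ∑ y, μ x y * (v x ^ 2 + v y ^ 2) * ρ x y ^ 2)
      ≤ 2 * ∑ x, m x * v x ^ 2 := by
    have hsplit2 : (∑ x, ∑ y, μ x y * (v x ^ 2 + v y ^ 2) * ρ x y ^ 2)
        = (∑ x, ∑ y, μ x y * v x ^ 2 * ρ x y ^ 2)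
          + ∑ x, ∑ y, μ x y * v y ^ 2 * ρ x y ^ 2 := by
      rw [← Finset.sum_add_distrib]
      refine Finset.sum_congr rfl fun x _ => ?_
      rw [← Finset.sum_add_distrib]
      exact Finset.sum_congr rfl fun y _ => by ring
    have hswap2 : (∑ x, ∑ y, μ x y * v y ^ 2 * ρ x y ^ 2)
        = ∑ x, ∑ y, μ x y * v x ^ 2 * ρ x y ^ 2 := by
      rw [Finset.sum_comm]
      refine Finset.sum_congr rfl fun x _ => Finset.sum_congr rfl fun y _ => ?_
      rw [← hsym x y, ← hρsym x y]
    have hone : ∀ x : Ω, (∑ y, μ x y * v x ^ 2 * ρ x y ^ 2) ≤ m x * v x ^ 2 := by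
      intro x
      have : (∑ y, μ x y * v x ^ 2 * ρ x y ^ 2) = v x ^ 2 * ∑ y, μ x y * ρ x y ^ 2 := by
        rw [Finset.mul_sum]
        exact Finset.sum_congr rfl fun y _ => by ring
      rw [this]
      calc v x ^ 2 * ∑ y, μ x y * ρ x y ^ 2 ≤ v x ^ 2 * m x :=
            mul_le_mul_of_nonneg_left (hint x) (sq_nonneg _)
        _ = m x * v x ^ 2 := by ring
    calc (∑ x, ∑ y, μ x y * (v x ^ 2 + v y ^ 2) * ρ x y ^ 2)
        = (∑ x, ∑ y, μ x y * v x ^ 2 * ρ x y ^ 2)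
          + ∑ x, ∑ y, μ x y * v x ^ 2 * ρ x y ^ 2 := by rw [hsplit2, hswap2]
      _ ≤ (∑ x, m x * v x ^ 2) + ∑ x, m x * v x ^ 2 :=
          add_le_add (Finset.sum_le_sum fun x _ => hone x)
            (Finset.sum_le_sum fun x _ => hone x)
      _ = 2 * ∑ x, m x * v x ^ 2 := by ring
  -- Rayleigh quotient bound
  have hQ : 2 * lam1 * (∑ x, m x * v x ^ 2) ≤ ∑ x, ∑ y, μ x y * (v y - v x) ^ 2 :=
    rayleigh m hm μ hμ lam1 hlam v
  -- combine
  have hX : 0 ≤ 2 / s ^ 2 * L := mul_nonneg (by positivity) hLnn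
  have hR2 : (2 / s ^ 2 * L) * (∑ x, ∑ y, μ x y * (v x ^ 2 + v y ^ 2) * ρ x y ^ 2)
      ≤ (2 / s ^ 2 * L) * (2 * ∑ x, m x * v x ^ 2) :=
    mul_le_mul_of_nonneg_left hRsum hX
  nlinarith [hTbound, hsplit, hQ, hR2]

theorem integral_maximum_principle {Ω : Type*} [Fintype Ω]
    (m : Ω → ℝ) (hm : ∀ x, 0 < m x)
    (μ : Ω → Ω → ℝ) (hμ : ∀ x y, 0 ≤ μ x y) (hsym : ∀ x y, μ x y = μ y x)
    (ρ : Ω → Ω → ℝ) (hρ0 : ∀ x, ρ x x = 0) (hρsym : ∀ x y, ρ x y = ρ y x)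
    (hρtri : ∀ x y z, ρ x z ≤ ρ x y + ρ y z) (hρnn : ∀ x y, 0 ≤ ρ x y)
    (hint : ∀ x, ∑ y, μ x y * ρ x y ^ 2 ≤ m x)
    (s : ℝ) (hs : 0 < s) (hjump : ∀ x y, 0 < μ x y → ρ x y ≤ s)
    (lam1 : ℝ)
    (hlam : lam1 = sInf {q : ℝ | ∃ g : Ω → ℝ, g ≠ 0 ∧
        q = ((1 / 2) * ∑ x, ∑ y, μ x y * (g y - g x) ^ 2) / (∑ x, m x * g x ^ 2)})
    (κ : ℝ) (hκ : 0 ≤ κ)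
    (ω : Ω → ℝ) (hω : ∀ x y, |ω x - ω y| ≤ κ * ρ x y)
    (u : ℝ → Ω → ℝ)
    (hu : ∀ (t : ℝ) (x : Ω), 0 ≤ t →
      HasDerivAt (fun τ => u τ x) ((m x)⁻¹ * ∑ y, μ x y * (u t y - u t x)) t) :
    AntitoneOn (fun t =>
        Real.exp (2 * lam1 * t - (2 / s ^ 2) * (Real.cosh (κ * s / 2) - 1) * t)
          * ∑ x, m x * u t x ^ 2 * Real.exp (ω x)) (Set.Ici 0) := by
  set C : ℝ := (2 / s ^ 2) * (Real.cosh (κ * s / 2) - 1) with hC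
  have hFt : ∀ t ∈ Set.Ici (0:ℝ), HasDerivAt (fun t =>
      Real.exp (2 * lam1 * t - C * t) * ∑ x, m x * u t x ^ 2 * Real.exp (ω x))
      ((2 * lam1 - C) * Real.exp (2 * lam1 * t - C * t)
          * (∑ x, m x * u t x ^ 2 * Real.exp (ω x))
        + Real.exp (2 * lam1 * t - C * t)
          * ∑ x, m x * (2 * u t x * ((m x)⁻¹ * ∑ y, μ x y * (u t y - u t x)))
              * Real.exp (ω x)) t := by
    intro t ht
    have hexp' : HasDerivAt (fun t => Real.exp (2 * lam1 * t - C * t))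
        ((2 * lam1 - C) * Real.exp (2 * lam1 * t - C * t)) t := by
      have hlin : HasDerivAt (fun t : ℝ => 2 * lam1 * t - C * t) (2 * lam1 - C) t := by
        have h := ((hasDerivAt_id t).const_mul (2 * lam1)).sub
          ((hasDerivAt_id t).const_mul C)
        simp only [mul_one] at h
        exact h
      simpa [mul_comm] using hlin.exp
    have hEd : HasDerivAt (fun t => ∑ x, m x * u t x ^ 2 * Real.exp (ω x))
        (∑ x, m x * (2 * u t x * ((m x)⁻¹ * ∑ y, μ x y * (u t y - u t x)))
          * Real.exp (ω x)) t := by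
      apply HasDerivAt.fun_sum
      intro x _
      have h1 := hu t x ht
      have h3 := ((h1.pow 2).const_mul (m x)).mul_const (Real.exp (ω x))
      refine h3.congr_deriv ?_
      push_cast
      ring
    exact hexp'.mul hEd
  apply antitoneOn_of_deriv_nonpos (convex_Ici 0)
  · exact fun t ht => (hFt t ht).continuousAt.continuousWithinAt
  · intro t ht
    rw [interior_Ici] at ht
    exact ((hFt t (Set.mem_Ici.mpr (le_of_lt (Set.mem_Ioi.mp ht)))).differentiableAt).differentiableWithinAt
  · intro t ht
    rw [interior_Ici] at ht
    rw [(hFt t (Set.mem_Ici.mpr (Set.mem_Ioi.mp ht).le)).deriv]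
    have key := key_ineq m hm μ hμ hsym ρ hρsym hρnn hint s hs hjump lam1 hlam κ hκ ω hω (u t)
    rw [← hC] at key
    have hexppos := (Real.exp_pos (2 * lam1 * t - C * t)).le
    nlinarith [mul_le_mul_of_nonneg_left key hexppos]
end
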